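/- Let A be a real m×d matrix, y ∈ ℝ^m, α > 0 and t ∈ (0,1). Let σ_m, σ_M ≥ 0 satisfy σ_m‖z‖₂ ≤ ‖A z‖₂ ≤ σ_M‖z‖₂ for all z ∈ ℝ^d, set θ = (σ_m² + σ_M²)/2, and define T_t(z) = (θ t + (1−t)α)⁻¹ · S_{1−t}( t(θ I − AᵀA) z + t Aᵀ y ). Then the unique minimizer z^t of the functional F_t(z) = t‖A z − y‖₂² + (1−t)(‖z‖₁ + α‖z‖₂²) over ℝ^d satisfies z^t = T_t(z^t). -/

import Mathlib

lemma scalar_min (a b lam s0 : ℝ) (ha : 0 < a) (hlam : 0 < lam)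
    (h : ∀ s : ℝ, 0 ≤ a*(s^2 - s0^2) + b*(s - s0) + lam*(|s| - |s0|)) :
    s0 = Real.sign (-b) * max (|b| - lam) 0 / (2*a) := by
  set s' := Real.sign (-b) * max (|b| - lam) 0 / (2*a) with hs'
  have key : ∀ s : ℝ, a*s'^2 + b*s' + lam*|s'| + a*(s-s')^2 ≤ a*s^2 + b*s + lam*|s| := by
    intro s
    rcases le_or_gt (|b|) lam with hb | hb
    · have h0 : s' = 0 := by
        rw [hs', max_eq_right (by linarith), mul_zero, zero_div]
      rw [h0]
      have h1 : |b*s| ≤ lam * |s| := by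
        rw [abs_mul]; exact mul_le_mul_of_nonneg_right hb (abs_nonneg s)
      have h2 := neg_abs_le (b*s)
      simp only [abs_zero]
      nlinarith
    · rcases lt_or_ge b 0 with hbneg | hbpos
      · have hsign : Real.sign (-b) = 1 := Real.sign_of_pos (by linarith)
        have habs : |b| = -b := abs_of_neg hbneg
        have h0 : s' = (-b - lam)/(2*a) := by rw [hs', hsign, max_eq_left (by linarith), habs]; ring
        have hs'pos : 0 < s' := by
          rw [h0]; exact div_pos (by linarith) (by linarith)
        have habs' : |s'| = s' := abs_of_pos hs'pos
        have he : 2*a*s' + b + lam = 0 := by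
          rw [h0]; field_simp; ring
        have h2 : s ≤ |s| := le_abs_self s
        rw [habs']
        have expand : a*s^2 + b*s + lam*|s| - (a*s'^2 + b*s' + lam*s' + a*(s-s')^2)
            = lam*(|s| - s) + (s - s')*(2*a*s' + b + lam) := by ring
        nlinarith [mul_nonneg hlam.le (sub_nonneg.2 h2)]
      · have hbpos' : 0 < b := by
          rcases lt_or_eq_of_le hbpos with h | h
          · exact h
          · exfalso; rw [← h] at hb; simp at hb; linarith
        have hsign : Real.sign (-b) = -1 := Real.sign_of_neg (by linarith)
        have habs : |b| = b := abs_of_pos hbpos'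
        have h0 : s' = -((b - lam)/(2*a)) := by rw [hs', hsign, max_eq_left (by linarith), habs]; ring
        have hs'neg : s' < 0 := by
          rw [h0, neg_lt_zero]; exact div_pos (by linarith) (by linarith)
        have habs' : |s'| = -s' := abs_of_neg hs'neg
        have he : 2*a*s' + b - lam = 0 := by
          rw [h0]; field_simp; ring
        have h2 : -s ≤ |s| := neg_le_abs s
        rw [habs']
        have expand : a*s^2 + b*s + lam*|s| - (a*s'^2 + b*s' + lam*(-s') + a*(s-s')^2)
            = lam*(|s| + s) + (s - s')*(2*a*s' + b - lam) := by ring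
        nlinarith [mul_nonneg hlam.le (by linarith : (0:ℝ) ≤ |s| + s)]
  have h1 := h s'
  have h2 := key s0
  have h3 : (s0-s')^2 ≤ 0 := by nlinarith
  have h4 := sq_nonneg (s0 - s')
  have h5 : s0 - s' = 0 := by
    by_contra hne
    exact absurd (le_antisymm h3 h4) (by simpa [sq_eq_zero_iff] using (pow_ne_zero 2 hne))
  linarith

lemma transfer (a c lam b s0 u : ℝ) (ha : 0 < a) (hc : 0 < c) (hlam : 0 < lam)
    (hu : 2*u = -b + (2*c - 2*a)*s0)
    (hs0 : s0 = Real.sign (-b) * max (|b| - lam) 0 / (2*a)) :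
    s0 = c⁻¹ * (Real.sign u * max (|u| - lam/2) 0) := by
  rcases le_or_gt (|b|) lam with hb | hb
  · have h0 : s0 = 0 := by
      rw [hs0, max_eq_right (by linarith), mul_zero, zero_div]
    have huval : u = -b/2 := by rw [h0] at hu; linarith
    have : |u| ≤ lam/2 := by
      rw [huval, abs_div, abs_neg]
      have h2 : |(2:ℝ)| = 2 := by norm_num
      rw [h2]; linarith
    rw [h0, max_eq_right (by linarith), mul_zero, mul_zero]
  · rcases lt_or_ge b 0 with hbneg | hbpos
    · have hsign : Real.sign (-b) = 1 := Real.sign_of_pos (by linarith)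
      have habs : |b| = -b := abs_of_neg hbneg
      have h0 : s0 = (-b - lam)/(2*a) := by rw [hs0, hsign, max_eq_left (by linarith), habs]; ring
      have hs0pos : 0 < s0 := by
        rw [h0]; exact div_pos (by linarith) (by linarith)
      have he : 2*a*s0 = -b - lam := by rw [h0]; field_simp
      have huval : u = c*s0 + lam/2 := by linarith
      have hupos : 0 < u := by rw [huval]; positivity
      have husign : Real.sign u = 1 := Real.sign_of_pos hupos
      have habsu : |u| = u := abs_of_pos hupos
      rw [husign, habsu, huval, one_mul]
      rw [max_eq_left (by nlinarith)]
      field_simp; ring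
    · have hbpos' : 0 < b := by
        rcases lt_or_eq_of_le hbpos with h | h
        · exact h
        · exfalso; rw [← h] at hb; simp at hb; linarith
      have hsign : Real.sign (-b) = -1 := Real.sign_of_neg (by linarith)
      have habs : |b| = b := abs_of_pos hbpos'
      have h0 : s0 = -((b - lam)/(2*a)) := by rw [hs0, hsign, max_eq_left (by linarith), habs]; ring
      have hs0neg : s0 < 0 := by
        rw [h0, neg_lt_zero]; exact div_pos (by linarith) (by linarith)
      have he : 2*a*s0 = -(b - lam) := by rw [h0]; field_simp
      have huval : u = c*s0 - lam/2 := by linarith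
      have huneg : u < 0 := by nlinarith
      have husign : Real.sign u = -1 := Real.sign_of_neg huneg
      have habsu : |u| = -u := abs_of_neg huneg
      rw [husign, habsu, huval]
      rw [max_eq_left (by nlinarith)]
      field_simp; ring

open Matrix

theorem elasticNet_minimizer_is_fixed_point {m d : ℕ}
    (A : Matrix (Fin m) (Fin d) ℝ) (y : EuclideanSpace ℝ (Fin m))
    (α t σm σM : ℝ) (hα : 0 < α) (ht0 : 0 < t) (ht1 : t < 1)
    (hσm : 0 ≤ σm) (hσM : 0 ≤ σM)
    (hlow : ∀ z : EuclideanSpace ℝ (Fin d), σm * ‖z‖ ≤ ‖Matrix.toEuclideanLin A z‖)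
    (hhigh : ∀ z : EuclideanSpace ℝ (Fin d), ‖Matrix.toEuclideanLin A z‖ ≤ σM * ‖z‖)
    (θ : ℝ) (hθ : θ = (σm ^ 2 + σM ^ 2) / 2)
    (T : EuclideanSpace ℝ (Fin d) → EuclideanSpace ℝ (Fin d))
    (hT : ∀ z i, T z i = (θ * t + (1 - t) * α)⁻¹ *
      (Real.sign (t * (θ * z i - (Aᵀ * A).mulVec (fun k => z k) i) + t * Aᵀ.mulVec (fun k => y k) i) *
        max (|t * (θ * z i - (Aᵀ * A).mulVec (fun k => z k) i) + t * Aᵀ.mulVec (fun k => y k) i| - (1 - t) / 2) 0))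
    (F : EuclideanSpace ℝ (Fin d) → ℝ)
    (hF : ∀ z, F z = t * ‖Matrix.toEuclideanLin A z - y‖ ^ 2 +
      (1 - t) * ((∑ i, |z i|) + α * ‖z‖ ^ 2))
    (zt : EuclideanSpace ℝ (Fin d)) (hzt : ∀ z, F zt ≤ F z) :
    zt = T zt := by
  have hθ0 : 0 ≤ θ := by rw [hθ]; positivity
  have normAz : ∀ z : EuclideanSpace ℝ (Fin d),
      ‖Matrix.toEuclideanLin A z - y‖^2 = ∑ j, (A.mulVec (fun k => z k) j - y j)^2 := by
    intro z
    rw [EuclideanSpace.norm_eq, Real.sq_sqrt (by positivity)]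
    exact Finset.sum_congr rfl fun j _ => by rw [Real.norm_eq_abs, sq_abs]; rfl
  have normsq : ∀ z : EuclideanSpace ℝ (Fin d), ‖z‖^2 = ∑ j, (z j)^2 := by
    intro z
    rw [EuclideanSpace.norm_eq, Real.sq_sqrt (by positivity)]
    exact Finset.sum_congr rfl fun j _ => by rw [Real.norm_eq_abs, sq_abs]
  ext i
  set s0 : ℝ := zt i with hs0def
  set Q : ℝ := ∑ j, (A j i)^2 with hQdef
  set B : ℝ := ∑ j, A j i * (A.mulVec (fun k => zt k) j - y j) with hBdef
  have hQ0 : 0 ≤ Q := Finset.sum_nonneg fun j _ => sq_nonneg _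
  set a : ℝ := t*Q + (1-t)*α with hadef
  set b : ℝ := 2*t*B - 2*t*Q*s0 with hbdef
  have ha : 0 < a := by
    have h1 : 0 < (1-t)*α := mul_pos (by linarith) hα
    have h2 : 0 ≤ t*Q := mul_nonneg ht0.le hQ0
    rw [hadef]; linarith
  have hlam : 0 < 1 - t := by linarith
  -- coordinates of mulVec at an update
  have hmv : ∀ (s : ℝ) (j : Fin m),
      A.mulVec (fun k => (WithLp.toLp 2 (Function.update zt i s) : EuclideanSpace ℝ (Fin d)) k) j
        = A.mulVec (fun k => zt k) j + A j i * (s - s0) := by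
    intro s j
    simp only [Matrix.mulVec, dotProduct, WithLp.ofLp_toLp]
    have e1 : ∑ k, A j k * Function.update zt i s k
        = A j i * s + ∑ k ∈ Finset.univ.erase i, A j k * zt k := by
      rw [← Finset.add_sum_erase _ _ (Finset.mem_univ i), Function.update_self]
      congr 1
      exact Finset.sum_congr rfl fun k hk => by
        rw [Function.update_of_ne (Finset.ne_of_mem_erase hk)]
    have e2 : ∑ k, A j k * zt k
        = A j i * s0 + ∑ k ∈ Finset.univ.erase i, A j k * zt k := by
      rw [← Finset.add_sum_erase _ _ (Finset.mem_univ i)]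
    rw [e1, e2]; ring
  have habs_sum : ∀ (s : ℝ), (∑ j, |(WithLp.toLp 2 (Function.update zt i s) : EuclideanSpace ℝ (Fin d)) j|)
      = |s| + ∑ j ∈ Finset.univ.erase i, |zt j| := by
    intro s
    rw [WithLp.ofLp_toLp, ← Finset.add_sum_erase _ _ (Finset.mem_univ i), Function.update_self]
    congr 1
    exact Finset.sum_congr rfl fun k hk => by
      rw [Function.update_of_ne (Finset.ne_of_mem_erase hk)]
  have hsq_sum : ∀ (s : ℝ), (∑ j, ((WithLp.toLp 2 (Function.update zt i s) : EuclideanSpace ℝ (Fin d)) j)^2)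
      = s^2 + ∑ j ∈ Finset.univ.erase i, (zt j)^2 := by
    intro s
    rw [WithLp.ofLp_toLp, ← Finset.add_sum_erase _ _ (Finset.mem_univ i), Function.update_self]
    congr 1
    exact Finset.sum_congr rfl fun k hk => by
      rw [Function.update_of_ne (Finset.ne_of_mem_erase hk)]
  have habs_zt : (∑ j, |zt j|) = |s0| + ∑ j ∈ Finset.univ.erase i, |zt j| := by
    rw [← Finset.add_sum_erase _ _ (Finset.mem_univ i)]
  have hsq_zt : (∑ j, (zt j)^2) = s0^2 + ∑ j ∈ Finset.univ.erase i, (zt j)^2 := by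
    rw [← Finset.add_sum_erase _ _ (Finset.mem_univ i)]
  have hsum_quad : ∀ (s : ℝ),
      (∑ j, (A.mulVec (fun k => zt k) j + A j i * (s - s0) - y j)^2)
        = (∑ j, (A.mulVec (fun k => zt k) j - y j)^2) + 2*(s-s0)*B + (s-s0)^2*Q := by
    intro s
    have expand : ∀ j : Fin m, (A.mulVec (fun k => zt k) j + A j i * (s - s0) - y j)^2
        = (A.mulVec (fun k => zt k) j - y j)^2
          + 2*(s-s0)*(A j i * (A.mulVec (fun k => zt k) j - y j))
          + (s-s0)^2*(A j i)^2 := fun j => by ring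
    simp_rw [expand]
    rw [Finset.sum_add_distrib, Finset.sum_add_distrib, ← Finset.mul_sum, ← Finset.mul_sum]
  have hupdate : ∀ (s : ℝ), F (WithLp.toLp 2 (Function.update zt i s))
      = F zt + a*(s^2 - s0^2) + b*(s - s0) + (1-t)*(|s| - |s0|) := by
    intro s
    rw [hF, hF, normAz, normAz, normsq, normsq]
    have hmv' : (∑ j, (A.mulVec (fun k => (WithLp.toLp 2 (Function.update zt i s) : EuclideanSpace ℝ (Fin d)) k) j - y j)^2)
        = ∑ j, (A.mulVec (fun k => zt k) j + A j i * (s - s0) - y j)^2 :=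
      Finset.sum_congr rfl fun j _ => by rw [hmv s j]
    rw [hmv', hsum_quad, habs_sum, hsq_sum, habs_zt, hsq_zt, hadef, hbdef]
    ring
  have hmin : ∀ s : ℝ, 0 ≤ a*(s^2 - s0^2) + b*(s - s0) + (1-t)*(|s| - |s0|) := by
    intro s
    have h := hzt (WithLp.toLp 2 (Function.update zt i s))
    rw [hupdate s] at h
    linarith
  have hs0 := scalar_min a b (1-t) s0 ha hlam hmin
  -- now transfer to the T formula
  set c : ℝ := θ * t + (1 - t) * α with hcdef
  have hc : 0 < c := by
    have h1 : 0 < (1-t)*α := mul_pos (by linarith) hα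
    have h2 : 0 ≤ θ*t := mul_nonneg hθ0 ht0.le
    rw [hcdef]; linarith
  set u : ℝ := t * (θ * zt i - (Aᵀ * A).mulVec (fun k => zt k) i) + t * Aᵀ.mulVec (fun k => y k) i with hudef
  have hAtA : (Aᵀ * A).mulVec (fun k => zt k) i = ∑ j, A j i * (A.mulVec (fun k => zt k) j) := by
    rw [← Matrix.mulVec_mulVec]
    simp [Matrix.mulVec, dotProduct, Matrix.transpose_apply]
  have hAty : Aᵀ.mulVec (fun k => y k) i = ∑ j, A j i * y j := by
    simp [Matrix.mulVec, dotProduct, Matrix.transpose_apply]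
  have hB : B = (∑ j, A j i * (A.mulVec (fun k => zt k) j)) - ∑ j, A j i * y j := by
    rw [hBdef, ← Finset.sum_sub_distrib]
    exact Finset.sum_congr rfl fun j _ => by ring
  have hu : 2*u = -b + (2*c - 2*a)*s0 := by
    rw [hudef, hAtA, hAty, hbdef, hcdef, hadef]
    rw [hB]
    ring
  rw [hT]
  exact transfer a c (1-t) b s0 u ha hc hlam hu hs0
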